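/- Let A and B be independent random elements of spaces 𝒜 and ℬ, and let E ⊆ 𝒜 × ℬ be a measurable event with P((A,B) ∈ E) > 0. If X is a random element of 𝒜 with law ℒ(X) = ℒ(A | (A,B) ∈ E), and Y is a random element of ℬ whose conditional law given X = a is ℒ(Y | X = a) = ℒ(B | (a,B) ∈ E), then the joint law of (X,Y) equals ℒ((A,B) | (A,B) ∈ E). -/

import Mathlib

open MeasureTheory ProbabilityTheory

/-- **PDC Lemma.** Independent `A`, `B` are encoded by their laws `μA`, `μB`, so that the joint
law of `(A, B)` is the product measure `μA.prod μB`. If `E` is a measurable event of positive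
probability, `X` has law `ℒ(A | (A,B) ∈ E)` (the first marginal of the conditioned product
measure), and, given `X = a`, `Y` has conditional law `ℒ(B | (a,B) ∈ E)`, then the joint law of
`(X, Y)` equals `ℒ((A,B) | (A,B) ∈ E)`. -/
theorem pdc_lemma {α β : Type*} [MeasurableSpace α] [MeasurableSpace β]
    (μA : Measure α) (μB : Measure β)
    [IsProbabilityMeasure μA] [IsProbabilityMeasure μB]
    (E : Set (α × β)) (hE : MeasurableSet E)
    (hpos : 0 < (μA.prod μB) E) :
    (((μA.prod μB)[|E]).map Prod.fst).bind
        (fun a => (μB[|{b | (a, b) ∈ E}]).map (fun b => (a, b)))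
      = (μA.prod μB)[|E] := by
  have hf : Measurable fun a => μB {b | (a, b) ∈ E} :=
    measurable_measure_prodMk_left hE
  -- value of the kernel on a measurable set
  have hker : ∀ (a : α) {t : Set (α × β)}, MeasurableSet t →
      ((μB[|{b | (a, b) ∈ E}]).map (fun b => (a, b))) t
        = (μB {b | (a, b) ∈ E})⁻¹ * μB {b | (a, b) ∈ E ∩ t} := by
    intro a t ht
    rw [Measure.map_apply (measurable_prodMk_left) ht,
      cond_apply (s := {b | (a, b) ∈ E}) (measurable_prodMk_left hE) μB]
    rfl
  have hmeas : Measurable fun a => (μB[|{b | (a, b) ∈ E}]).map (fun b => (a, b)) := by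
    apply Measure.measurable_of_measurable_coe
    intro t ht
    simp only [fun a => hker a ht]
    exact hf.inv.mul (measurable_measure_prodMk_left (hE.inter ht))
  refine Measure.ext fun s hs => ?_
  have hg : Measurable fun a =>
      (Measure.map (fun b => (a, b)) μB[|{b | (a, b) ∈ E}]) s :=
    (Measure.measurable_coe hs).comp hmeas
  rw [Measure.bind_apply hs hmeas.aemeasurable, lintegral_map hg measurable_fst]
  simp only [hker _ hs]
  rw [cond_apply hE, ProbabilityTheory.cond, lintegral_smul_measure,
    ← lintegral_indicator hE _]
  have hgmeas : Measurable fun p : α × β =>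
      (μB {b | (p.1, b) ∈ E})⁻¹ * μB {b | (p.1, b) ∈ E ∩ s} :=
    (hf.comp measurable_fst).inv.mul
      ((measurable_measure_prodMk_left (hE.inter hs)).comp measurable_fst)
  rw [lintegral_prod _ (hgmeas.indicator hE).aemeasurable]
  congr 1
  rw [Measure.prod_apply (hE.inter hs)]
  refine lintegral_congr fun a => ?_
  have hind : (fun b => E.indicator
      (fun p : α × β => (μB {b | (p.1, b) ∈ E})⁻¹ * μB {b | (p.1, b) ∈ E ∩ s}) (a, b))
      = {b | (a, b) ∈ E}.indicator
        (fun _ => (μB {b | (a, b) ∈ E})⁻¹ * μB {b | (a, b) ∈ E ∩ s}) := by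
    funext b
    by_cases hb : (a, b) ∈ E <;> simp [Set.indicator, hb]
  rw [hind, lintegral_indicator_const (s := {b | (a, b) ∈ E})
    (measurable_prodMk_left hE)]
  rcases eq_or_ne (μB {b | (a, b) ∈ E}) 0 with h0 | h0
  · have hz : μB {b | (a, b) ∈ E ∩ s} = 0 :=
      le_antisymm (h0 ▸ measure_mono fun b hb => hb.1) zero_le
    have h2 : μB (Prod.mk a ⁻¹' (E ∩ s)) = 0 := hz
    rw [Set.preimage_inter] at h2
    simp [h0, h2]
  · rw [mul_comm (μB {b | (a, b) ∈ E})⁻¹, mul_assoc,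
      ENNReal.inv_mul_cancel h0 (measure_ne_top _ _), mul_one]
    rfl
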